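/- Let G be a finite commutative group and let I : ℕ → G → ℂ be any function. Define N : ℕ → G → ℂ by N_m(ε') = Σ_{k | m} (m/k) · Σ_{ε ∈ G with ε^k = ε'} I_{m/k}(ε) for every m ≥ 1 and ε' ∈ G. Then for every d ≥ 1 and every ε ∈ G, I_d(ε) = (1/d) · Σ_{k | d} μ(k) · Σ_{ε₁ ∈ G with ε₁^k = ε} N_{d/k}(ε₁), where μ is the Möbius function. -/

import Mathlib

open Finset

private lemma sum_moeb' (n : ℕ) :
    ∑ k ∈ n.divisors, ((ArithmeticFunction.moebius k : ℤ) : ℂ) =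
      if n = 1 then 1 else 0 := by
  have h := ArithmeticFunction.coe_mul_zeta_apply
    (f := (ArithmeticFunction.moebius : ArithmeticFunction ℂ)) (x := n)
  rw [ArithmeticFunction.coe_moebius_mul_coe_zeta, ArithmeticFunction.one_apply] at h
  simpa using h.symm

private lemma T_comp {G : Type*} [CommGroup G] [Fintype G] [DecidableEq G]
    (j k : ℕ) (g : G → ℂ) (ε' : G) :
    ∑ ε₁ ∈ univ.filter (fun ε₁ : G => ε₁ ^ k = ε'),
      ∑ ε₂ ∈ univ.filter (fun ε₂ : G => ε₂ ^ j = ε₁), g ε₂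
      = ∑ ε₂ ∈ univ.filter (fun ε₂ : G => ε₂ ^ (j * k) = ε'), g ε₂ := by
  have h1 : ∀ ε₁ : G, ∑ ε₂ ∈ univ.filter (fun ε₂ : G => ε₂ ^ j = ε₁), g ε₂
      = ∑ ε₂ ∈ (univ : Finset G), if ε₂ ^ j = ε₁ then g ε₂ else 0 := fun ε₁ =>
    Finset.sum_filter _ _
  rw [Finset.sum_congr rfl fun ε₁ _ => h1 ε₁, Finset.sum_comm]
  rw [Finset.sum_filter]
  refine Finset.sum_congr rfl fun ε₂ _ => ?_
  have h2 : ∀ ε₁ : G, (if ε₂ ^ j = ε₁ then g ε₂ else 0) =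
      (if ε₁ = ε₂ ^ j then g ε₂ else 0) := fun ε₁ => by simp [eq_comm]
  rw [Finset.sum_congr rfl fun ε₁ _ => h2 ε₁,
    Finset.sum_ite_eq' (univ.filter (fun ε₁ : G => ε₁ ^ k = ε')) (ε₂ ^ j) (fun _ => g ε₂)]
  simp [← pow_mul]

private lemma divisors_reindex {M : Type*} [AddCommMonoid M] (d : ℕ) (F : ℕ → ℕ → M) :
    ∑ k ∈ d.divisors, ∑ j ∈ (d / k).divisors, F k (k * j)
      = ∑ n ∈ d.divisors, ∑ k ∈ n.divisors, F k n := by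
  rw [Finset.sum_sigma', Finset.sum_sigma']
  refine Finset.sum_nbij' (fun p => ⟨p.1 * p.2, p.1⟩) (fun p => ⟨p.2, p.1 / p.2⟩)
    ?_ ?_ ?_ ?_ ?_
  · rintro ⟨k, j⟩ hp
    simp only [Finset.mem_sigma, Nat.mem_divisors] at hp ⊢
    obtain ⟨⟨hkd, hd0⟩, hj, hdk0⟩ := hp
    have hk0 : k ≠ 0 := by rintro rfl; exact hd0 (Nat.eq_zero_of_zero_dvd hkd)
    have hj0 : j ≠ 0 := by rintro rfl; exact hdk0 (Nat.eq_zero_of_zero_dvd hj)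
    exact ⟨⟨(Nat.dvd_div_iff_mul_dvd hkd).mp hj, hd0⟩, dvd_mul_right k j,
      Nat.mul_ne_zero hk0 hj0⟩
  · rintro ⟨n, k⟩ hp
    simp only [Finset.mem_sigma, Nat.mem_divisors] at hp ⊢
    obtain ⟨⟨hnd, hd0⟩, hkn, hn0⟩ := hp
    have hkd : k ∣ d := dvd_trans hkn hnd
    have hk0 : k ≠ 0 := by rintro rfl; exact hn0 (Nat.eq_zero_of_zero_dvd hkn)
    refine ⟨⟨hkd, hd0⟩, ?_, ?_⟩
    · obtain ⟨c, rfl⟩ := hkn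
      rw [Nat.mul_div_cancel_left _ (Nat.pos_of_ne_zero hk0)]
      exact (Nat.dvd_div_iff_mul_dvd hkd).mpr hnd
    · have := Nat.div_pos (Nat.le_of_dvd (Nat.pos_of_ne_zero hd0) hkd)
        (Nat.pos_of_ne_zero hk0)
      omega
  · rintro ⟨k, j⟩ hp
    simp only [Finset.mem_sigma, Nat.mem_divisors] at hp
    obtain ⟨⟨hkd, hd0⟩, -⟩ := hp
    have hk0 : k ≠ 0 := by rintro rfl; exact hd0 (Nat.eq_zero_of_zero_dvd hkd)
    simp [Nat.mul_div_cancel_left _ (Nat.pos_of_ne_zero hk0)]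
  · rintro ⟨n, k⟩ hp
    simp only [Finset.mem_sigma, Nat.mem_divisors] at hp
    obtain ⟨-, hkn, -⟩ := hp
    simp [Nat.mul_div_cancel' hkn]
  · rintro ⟨k, j⟩ hp
    simp

theorem moebius_inversion_group_counts
    (G : Type*) [CommGroup G] [Fintype G] [DecidableEq G]
    (I N : ℕ → G → ℂ)
    (hN : ∀ m : ℕ, 1 ≤ m → ∀ ε' : G,
      N m ε' = ∑ k ∈ m.divisors, ((m / k : ℕ) : ℂ) *
        ∑ ε ∈ Finset.univ.filter (fun ε : G => ε ^ k = ε'), I (m / k) ε) :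
    ∀ d : ℕ, 1 ≤ d → ∀ ε : G,
      I d ε = (1 / (d : ℂ)) * ∑ k ∈ d.divisors,
        ((ArithmeticFunction.moebius k : ℤ) : ℂ) *
          ∑ ε₁ ∈ Finset.univ.filter (fun ε₁ : G => ε₁ ^ k = ε), N (d / k) ε₁ := by
  intro d hd ε
  have hd0 : d ≠ 0 := by omega
  have hdc : (d : ℂ) ≠ 0 := Nat.cast_ne_zero.mpr hd0
  have key : ∑ k ∈ d.divisors,
      ((ArithmeticFunction.moebius k : ℤ) : ℂ) *
        ∑ ε₁ ∈ Finset.univ.filter (fun ε₁ : G => ε₁ ^ k = ε), N (d / k) ε₁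
      = (d : ℂ) * I d ε := by
    have step1 : ∀ k ∈ d.divisors,
        ((ArithmeticFunction.moebius k : ℤ) : ℂ) *
          ∑ ε₁ ∈ Finset.univ.filter (fun ε₁ : G => ε₁ ^ k = ε), N (d / k) ε₁
        = ∑ j ∈ (d / k).divisors,
            (((ArithmeticFunction.moebius k : ℤ) : ℂ) * ((d / (k * j) : ℕ) : ℂ) *
              ∑ ε₂ ∈ Finset.univ.filter (fun ε₂ : G => ε₂ ^ (k * j) = ε), I (d / (k * j)) ε₂) := by
      intro k hk
      obtain ⟨hkd, -⟩ := Nat.mem_divisors.mp hk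
      have hk0 : 0 < k := Nat.pos_of_dvd_of_pos hkd (by omega)
      have hdk : 1 ≤ d / k := Nat.one_le_div_iff hk0 |>.mpr (Nat.le_of_dvd (by omega) hkd)
      have : ∑ ε₁ ∈ Finset.univ.filter (fun ε₁ : G => ε₁ ^ k = ε), N (d / k) ε₁
          = ∑ j ∈ (d / k).divisors, (((d / (k * j) : ℕ) : ℂ) *
              ∑ ε₂ ∈ Finset.univ.filter (fun ε₂ : G => ε₂ ^ (k * j) = ε), I (d / (k * j)) ε₂) := by
        calc ∑ ε₁ ∈ Finset.univ.filter (fun ε₁ : G => ε₁ ^ k = ε), N (d / k) ε₁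
            = ∑ ε₁ ∈ Finset.univ.filter (fun ε₁ : G => ε₁ ^ k = ε),
                ∑ j ∈ (d / k).divisors, ((d / k / j : ℕ) : ℂ) *
                  ∑ ε₂ ∈ Finset.univ.filter (fun ε₂ : G => ε₂ ^ j = ε₁), I (d / k / j) ε₂ := by
                refine Finset.sum_congr rfl fun ε₁ _ => hN (d / k) hdk ε₁
          _ = ∑ j ∈ (d / k).divisors, ((d / k / j : ℕ) : ℂ) *
                ∑ ε₁ ∈ Finset.univ.filter (fun ε₁ : G => ε₁ ^ k = ε),
                  ∑ ε₂ ∈ Finset.univ.filter (fun ε₂ : G => ε₂ ^ j = ε₁), I (d / k / j) ε₂ := by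
                rw [Finset.sum_comm]
                exact Finset.sum_congr rfl fun j _ => (Finset.mul_sum _ _ _).symm
          _ = _ := by
                refine Finset.sum_congr rfl fun j hj => ?_
                rw [T_comp, Nat.div_div_eq_div_mul, mul_comm j k]
      rw [this, Finset.mul_sum]
      exact Finset.sum_congr rfl fun j _ => (mul_assoc _ _ _).symm
    rw [Finset.sum_congr rfl step1,
      divisors_reindex d (fun k n => ((ArithmeticFunction.moebius k : ℤ) : ℂ) *
        ((d / n : ℕ) : ℂ) * ∑ ε₂ ∈ Finset.univ.filter (fun ε₂ : G => ε₂ ^ n = ε), I (d / n) ε₂)]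
    have : ∀ n ∈ d.divisors,
        ∑ k ∈ n.divisors, (((ArithmeticFunction.moebius k : ℤ) : ℂ) * ((d / n : ℕ) : ℂ) *
          ∑ ε₂ ∈ Finset.univ.filter (fun ε₂ : G => ε₂ ^ n = ε), I (d / n) ε₂)
        = if n = 1 then ((d / n : ℕ) : ℂ) *
            ∑ ε₂ ∈ Finset.univ.filter (fun ε₂ : G => ε₂ ^ n = ε), I (d / n) ε₂ else 0 := by
      intro n _
      rw [← Finset.sum_mul, ← Finset.sum_mul, sum_moeb', ite_mul, ite_mul, one_mul, zero_mul,
        zero_mul]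
    rw [Finset.sum_congr rfl this, Finset.sum_ite_eq' d.divisors 1]
    simp only [Nat.one_mem_divisors.mpr hd0, if_true, Nat.div_one, pow_one]
    have : Finset.univ.filter (fun ε₂ : G => ε₂ = ε) = {ε} := by
      simp [Finset.filter_eq', Finset.mem_univ]
    rw [this, Finset.sum_singleton]
  rw [key]
  field_simp
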